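/- Let G be a connected finite graph and ω a 1-form such that the twisted edge adjacency matrix W_{1,ω} has the same spectrum (with multiplicity) as the untwisted edge adjacency matrix W₁. Then the character χ_ω restricted to H₁(G,ℤ) is trivial. -/

import Mathlib

/-- A finite (multi)graph, given by its set of vertices and its set of darts
(oriented edges): each unoriented edge corresponds to a pair `{d, inv d}` of darts. -/
structure Multigraph where
  V : Type
  D : Type
  fintypeV : Fintype V
  fintypeD : Fintype D
  decEqV : DecidableEq V
  decEqD : DecidableEq D
  inv : D → D
  inv_inv : ∀ d, inv (inv d) = d
  inv_ne : ∀ d, inv d ≠ d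
  head : D → V

instance (G : Multigraph) : Fintype G.V := G.fintypeV
instance (G : Multigraph) : Fintype G.D := G.fintypeD
instance (G : Multigraph) : DecidableEq G.V := G.decEqV
instance (G : Multigraph) : DecidableEq G.D := G.decEqD

namespace Multigraph

variable (G : Multigraph)

/-- The initial vertex `d(0)` of an oriented edge. -/
def tail (d : G.D) : G.V := G.head (G.inv d)

/-- Two vertices are adjacent if some oriented edge goes from one to the other. -/
def Adj (v w : G.V) : Prop := ∃ d : G.D, G.tail d = v ∧ G.head d = w

/-- The graph is connected. -/
def Connected : Prop := Nonempty G.V ∧ ∀ v w : G.V, Relation.ReflTransGen G.Adj v w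

/-- `ω` is a 1-form: it changes sign under reversal of orientation. -/
def IsOneForm (ω : G.D → ℝ) : Prop := ∀ d, ω (G.inv d) = - ω d

end Multigraph

namespace Multigraph

variable (G : Multigraph)

/-- The value `χ_ω(d) = e^{2πi ω(d)}` of the character attached to `ω` on a dart. -/
noncomputable def chi (ω : G.D → ℝ) (d : G.D) : ℂ :=
  Complex.exp (2 * Real.pi * Complex.I * (ω d))

/-- `a` feeds into `b`: `a(1) = b(0)` and `b ≠ a⁻¹`. -/
def feeds (a b : G.D) : Prop := G.head a = G.tail b ∧ b ≠ G.inv a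

instance (a b : G.D) : Decidable (G.feeds a b) :=
  inferInstanceAs (Decidable (_ ∧ _))

/-- The (untwisted) edge adjacency matrix `W₁`. -/
noncomputable def W1 : Matrix G.D G.D ℂ :=
  fun a b => if G.feeds a b then 1 else 0

/-- The edge adjacency matrix twisted by `χ_ω`: entry `χ_ω(b)` when `a` feeds into `b`. -/
noncomputable def W1t (ω : G.D → ℝ) : Matrix G.D G.D ℂ :=
  fun a b => if G.feeds a b then G.chi ω b else 0

/-- The vertex adjacency matrix twisted by `χ_ω`. -/
noncomputable def A (ω : G.D → ℝ) : Matrix G.V G.V ℂ :=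
  fun v w => ∑ d ∈ Finset.univ.filter (fun d : G.D => G.tail d = v ∧ G.head d = w),
    G.chi ω d

end Multigraph

namespace Multigraph

variable (G : Multigraph)

/-- The set of integral 1-cycles: `H₁(G,ℤ)`, realized as antisymmetric
integer-valued functions on darts with vanishing boundary at every vertex. -/
def H1set : Set (G.D → ℤ) :=
  {α | (∀ d, α (G.inv d) = - α d) ∧
    ∀ v : G.V, ∑ d ∈ Finset.univ.filter (fun d : G.D => G.head d = v), α d = 0}

/-- The pairing `ω(α)` between a 1-form `ω` and an integral 1-chain `α`. -/
noncomputable def pairingZ (ω : G.D → ℝ) (α : G.D → ℤ) : ℝ :=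
  (1 / 2) * ∑ d : G.D, ω d * (α d : ℝ)

end Multigraph

section Helpers

open Polynomial Matrix Finset

variable {ι : Type} [Fintype ι] [DecidableEq ι]

variable {ι : Type} [Fintype ι] [DecidableEq ι]

private lemma ms_prod_swap (s t : Multiset ℂ) (f : ℂ → ℂ → ℂ) :
    (s.map (fun a => (t.map (f a)).prod)).prod
      = (t.map (fun b => (s.map (fun a => f a b)).prod)).prod := by
  induction s using Multiset.induction with
  | empty => simp
  | cons a s ih => simp [ih, ← Multiset.prod_map_mul]

private lemma ms_prod_smul (s : Multiset ℂ) (c : ℂ) (g : ℂ → ℂ) :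
    (s.map (fun a => c * g a)).prod = c ^ Multiset.card s * (s.map g).prod := by
  induction s using Multiset.induction with
  | empty => simp
  | cons a s ih => simp [ih, pow_succ]; ring

private lemma eval_charpoly' (M : Matrix ι ι ℂ) (x : ℂ) :
    M.charpoly.eval x = ((algebraMap ℂ (Matrix ι ι ℂ) x) - M).det := by
  rw [Matrix.charpoly, eval_det, matPolyEquiv_charmatrix]
  simp [algebraMap_eq_diagonal]
  rfl

private lemma trace_pow_roots (M : Matrix ι ι ℂ) (k : ℕ) (hk : k ≠ 0) :
    (M ^ k).trace = ((M.charpoly.roots).map (· ^ k)).sum := by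
  classical
  set n := Fintype.card ι with hn
  set μ := M.charpoly.roots with hμ
  have hsplits : M.charpoly.Splits := IsAlgClosed.splits _
  have hμcard : Multiset.card μ = n := by
    rw [hμ, splits_iff_card_roots.mp hsplits, Matrix.charpoly_natDegree_eq_dim]
  have hfactor : M.charpoly = (μ.map fun a => X - C a).prod :=
    hsplits.eq_prod_roots_of_monic M.charpoly_monic
  have heval : ∀ y : ℂ, M.charpoly.eval y = (μ.map fun a => y - a).prod := by
    intro y
    rw [hfactor, eval_multiset_prod, Multiset.map_map]
    simp
  have hdet : ∀ y : ℂ, (M - algebraMap ℂ (Matrix ι ι ℂ) y).det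
      = (-1) ^ n * M.charpoly.eval y := by
    intro y
    rw [eval_charpoly', ← Matrix.det_neg, neg_sub]
  have key : (M ^ k).charpoly = ((μ.map (· ^ k)).map (fun a => X - C a)).prod := by
    apply Polynomial.funext
    intro x
    have hR : (((μ.map (· ^ k)).map (fun a => X - C a)).prod).eval x
        = (μ.map fun b => x - b ^ k).prod := by
      rw [eval_multiset_prod, Multiset.map_map, Multiset.map_map]
      simp
    rw [hR, eval_charpoly']
    -- set up q = X^k - C x
    set q : ℂ[X] := X ^ k - C x with hq
    have hqm : q.Monic := monic_X_pow_sub_C x hk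
    have hqsplits : q.Splits := IsAlgClosed.splits _
    set ν := q.roots with hν
    have hνcard : Multiset.card ν = k := by
      rw [hν, splits_iff_card_roots.mp hqsplits, hq, natDegree_X_pow_sub_C]
    have hqfact : q = (ν.map fun a => X - C a).prod :=
      hqsplits.eq_prod_roots_of_monic hqm
    have hqeval : ∀ y : ℂ, (ν.map fun a => y - a).prod = y ^ k - x := by
      intro y
      have hcg := congrArg (Polynomial.eval y) hqfact
      rw [hq, eval_multiset_prod, Multiset.map_map] at hcg
      simp only [Function.comp, eval_sub, eval_pow, eval_X, eval_C] at hcg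
      exact hcg.symm
    -- express M^k - x as a product over the list of roots of q
    set l : List ℂ := ν.toList with hl
    have hlnu : (l : Multiset ℂ) = ν := Multiset.coe_toList ν
    have haev : algebraMap ℂ (Matrix ι ι ℂ) x - M ^ k
        = - (l.map fun a => M - algebraMap ℂ (Matrix ι ι ℂ) a).prod := by
      have h1 : aeval M q = M ^ k - algebraMap ℂ (Matrix ι ι ℂ) x := by
        rw [hq]; simp
      have h2 : q = ((l.map fun a => X - C a : List ℂ[X]) : Multiset ℂ[X]).prod := by
        rw [hqfact, ← hlnu, Multiset.map_coe]
      rw [Multiset.prod_coe] at h2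
      have h3 : aeval M q = (l.map fun a => M - algebraMap ℂ (Matrix ι ι ℂ) a).prod := by
        rw [h2, map_list_prod (aeval M : ℂ[X] →ₐ[ℂ] Matrix ι ι ℂ), List.map_map]
        congr 1
        ext a
        simp
      rw [← h3, h1]
      exact (neg_sub _ _).symm
    rw [haev, Matrix.det_neg]
    have hdl : ((l.map fun a => M - algebraMap ℂ (Matrix ι ι ℂ) a).prod).det
        = (ν.map fun a => (M - algebraMap ℂ (Matrix ι ι ℂ) a).det).prod := by
      have h4 := map_list_prod (Matrix.detMonoidHom : Matrix ι ι ℂ →* ℂ)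
        (l.map fun a => M - algebraMap ℂ (Matrix ι ι ℂ) a)
      simp only [Matrix.coe_detMonoidHom, List.map_map] at h4
      rw [h4, ← hlnu, Multiset.map_coe, Multiset.prod_coe]
      rfl
    rw [hdl]
    have h5 : (ν.map fun a => (M - algebraMap ℂ (Matrix ι ι ℂ) a).det).prod
        = (-1 : ℂ) ^ (n * k) * (ν.map fun a => (μ.map fun b => a - b).prod).prod := by
      have : (ν.map fun a => (M - algebraMap ℂ (Matrix ι ι ℂ) a).det).prod
          = (ν.map fun a => (-1 : ℂ) ^ n * (μ.map fun b => a - b).prod).prod := by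
        congr 1
        apply Multiset.map_congr rfl
        intro a _
        rw [hdet a, heval a]
      rw [this, ms_prod_smul, hνcard, ← pow_mul]
    rw [h5, ms_prod_swap]
    have h6 : (μ.map fun b => (ν.map fun a => a - b).prod).prod
        = (-1 : ℂ) ^ (k * n) * (μ.map fun b => b ^ k - x).prod := by
      have : (μ.map fun b => (ν.map fun a => a - b).prod).prod
          = (μ.map fun b => (-1 : ℂ) ^ k * (b ^ k - x)).prod := by
        apply congrArg
        apply Multiset.map_congr rfl
        intro b _
        have : (ν.map fun a => a - b).prod = (ν.map fun a => (-1) * (b - a)).prod := by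
          apply congrArg
          apply Multiset.map_congr rfl
          intro a _
          ring
        rw [this, ms_prod_smul, hνcard, hqeval b]
      rw [this, ms_prod_smul, hμcard, ← pow_mul]
    rw [h6]
    have h7 : (μ.map fun b => b ^ k - x).prod
        = (-1 : ℂ) ^ n * (μ.map fun b => x - b ^ k).prod := by
      have : (μ.map fun b => b ^ k - x).prod
          = (μ.map fun b => (-1 : ℂ) * (x - b ^ k)).prod := by
        apply congrArg
        apply Multiset.map_congr rfl
        intro b _
        ring
      rw [this, ms_prod_smul, hμcard]
    rw [h7, ← hn]
    have hfin : ∀ P : ℂ, (-1 : ℂ) ^ n * ((-1) ^ (n * k) * ((-1) ^ (k * n) * ((-1) ^ n * P)))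
        = P := by
      intro P
      rw [← mul_assoc, ← mul_assoc, ← mul_assoc, ← pow_add, ← pow_add, ← pow_add]
      rw [show n + n * k + k * n + n = 2 * (n + n * k) by ring, pow_mul]
      simp
    exact hfin _
  rw [Matrix.trace_eq_sum_roots_charpoly (M ^ k), key, roots_multiset_prod_X_sub_C]

private lemma pow_succ_apply (W : Matrix ι ι ℂ) :
    ∀ (k : ℕ) (a b : ι), (W ^ (k + 1)) a b
      = ∑ f : Fin (k + 1) → ι, (if f (Fin.last k) = b
          then W a (f 0) * ∏ i : Fin k, W (f i.castSucc) (f i.succ) else 0) := by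
  intro k
  induction k with
  | zero =>
      intro a b
      rw [pow_one]
      rw [← (Equiv.funUnique (Fin 1) ι).symm.sum_comp]
      simp [Equiv.funUnique]
  | succ k ih =>
      intro a b
      rw [pow_succ', Matrix.mul_apply]
      simp_rw [ih]
      rw [← (Fin.consEquiv (fun _ : Fin (k + 2) => ι)).sum_comp]
      rw [Fintype.sum_prod_type]
      apply Finset.sum_congr rfl
      intro c _
      rw [Finset.mul_sum]
      apply Finset.sum_congr rfl
      intro f _
      set g : Fin (k + 2) → ι := (Fin.consEquiv (fun _ : Fin (k + 2) => ι)) (c, f) with hg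
      have hg0 : g 0 = c := rfl
      have hgs : ∀ i : Fin (k + 1), g i.succ = f i := fun i =>
        @Fin.cons_succ (k + 1) (fun _ => ι) c f i
      have h2 : g (Fin.last (k + 1)) = f (Fin.last k) := by
        rw [show Fin.last (k + 1) = (Fin.last k).succ from rfl]
        exact hgs (Fin.last k)
      have h3 : (∏ i : Fin (k + 1), W (g i.castSucc) (g i.succ))
          = W c (f 0) * ∏ i : Fin k, W (f i.castSucc) (f i.succ) := by
        rw [Fin.prod_univ_succ]
        simp only [Fin.castSucc_zero, hg0, hgs, ← Fin.succ_castSucc]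
      rw [h2, h3]
      by_cases hb : f (Fin.last k) = b <;> simp [hb, hg0, mul_assoc]

private lemma trace_pow_succ (W : Matrix ι ι ℂ) (k : ℕ) :
    (W ^ (k + 1)).trace = ∑ f : Fin (k + 1) → ι,
      W (f (Fin.last k)) (f 0) * ∏ i : Fin k, W (f i.castSucc) (f i.succ) := by
  rw [Matrix.trace]
  simp_rw [Matrix.diag_apply, pow_succ_apply]
  rw [Finset.sum_comm]
  apply Finset.sum_congr rfl
  intro f _
  rw [Finset.sum_ite_eq Finset.univ (f (Fin.last k))
    (fun a => W a (f 0) * ∏ i : Fin k, W (f i.castSucc) (f i.succ))]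
  simp

private lemma sum_eq_card_forces_one {γ : Type} [DecidableEq γ] (s : Finset γ) (f : γ → ℂ)
    (h1 : ∀ i ∈ s, ‖f i‖ = 1) (h2 : ∑ i ∈ s, f i = (s.card : ℂ)) :
    ∀ i ∈ s, f i = 1 := by
  have hre : ∑ i ∈ s, (f i).re = (s.card : ℝ) := by
    have := congrArg Complex.re h2
    rw [Complex.re_sum] at this
    simpa using this
  have hle : ∀ i ∈ s, (f i).re ≤ 1 := by
    intro i hi
    calc (f i).re ≤ ‖f i‖ := Complex.re_le_norm _
    _ = 1 := h1 i hi
  have hall : ∀ i ∈ s, (f i).re = 1 := by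
    by_contra hc
    push_neg at hc
    obtain ⟨i₀, hi₀, hne⟩ := hc
    have hlt : (f i₀).re < 1 := lt_of_le_of_ne (hle i₀ hi₀) hne
    have : ∑ i ∈ s, (f i).re < ∑ i ∈ s, (1 : ℝ) :=
      Finset.sum_lt_sum hle ⟨i₀, hi₀, hlt⟩
    rw [Finset.sum_const, nsmul_eq_mul, mul_one, hre] at this
    exact lt_irrefl _ this
  intro i hi
  have h1' := h1 i hi
  have hre1 := hall i hi
  have habs := Complex.sq_norm (f i)
  rw [h1', one_pow, Complex.normSq_apply] at habs
  have him : (f i).im = 0 := by nlinarith [sq_nonneg (f i).im]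
  exact Complex.ext (by simp [hre1]) (by simp [him])

end Helpers

namespace Multigraph

open Finset

variable (G : Multigraph)

/-- A closed non-backtracking walk indexed by `Fin (k+1)`. -/
def IsClosedWalk (k : ℕ) (f : Fin (k + 1) → G.D) : Prop :=
  G.feeds (f (Fin.last k)) (f 0) ∧ ∀ i : Fin k, G.feeds (f i.castSucc) (f i.succ)

instance (k : ℕ) (f : Fin (k + 1) → G.D) : Decidable (G.IsClosedWalk k f) :=
  inferInstanceAs (Decidable (_ ∧ _))

private lemma abs_chi (ω : G.D → ℝ) (d : G.D) : ‖G.chi ω d‖ = 1 := by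
  rw [Multigraph.chi, Complex.norm_exp]
  have : (2 * ↑Real.pi * Complex.I * ↑(ω d)).re = 0 := by
    simp [Complex.mul_re, Complex.mul_im]
  rw [this, Real.exp_zero]

private lemma trace_W1_pow (k : ℕ) :
    (G.W1 ^ (k + 1)).trace
      = ((Finset.univ.filter (fun f : Fin (k + 1) → G.D => G.IsClosedWalk k f)).card : ℂ) := by
  rw [trace_pow_succ]
  have hterm : ∀ f : Fin (k + 1) → G.D,
      G.W1 (f (Fin.last k)) (f 0) * ∏ i : Fin k, G.W1 (f i.castSucc) (f i.succ)
        = if G.IsClosedWalk k f then 1 else 0 := by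
    intro f
    simp only [Multigraph.W1]
    by_cases hC : G.IsClosedWalk k f
    · rw [if_pos hC, if_pos hC.1,
        Finset.prod_congr rfl (fun i (_ : i ∈ Finset.univ) => if_pos (hC.2 i))]
      simp
    · rw [if_neg hC]
      rw [Multigraph.IsClosedWalk, not_and_or] at hC
      rcases hC with hC | hC
      · rw [if_neg hC, zero_mul]
      · push_neg at hC
        obtain ⟨i, hi⟩ := hC
        rw [Finset.prod_eq_zero (Finset.mem_univ i)
          (if_neg hi : (if G.feeds (f i.castSucc) (f i.succ) then (1 : ℂ) else 0) = 0), mul_zero]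
  rw [Finset.sum_congr rfl (fun f _ => hterm f), Finset.sum_boole]

private lemma trace_W1t_pow (ω : G.D → ℝ) (k : ℕ) :
    (G.W1t ω ^ (k + 1)).trace
      = ∑ f ∈ Finset.univ.filter (fun f : Fin (k + 1) → G.D => G.IsClosedWalk k f),
          ∏ j : Fin (k + 1), G.chi ω (f j) := by
  rw [trace_pow_succ, Finset.sum_filter]
  apply Finset.sum_congr rfl
  intro f _
  simp only [Multigraph.W1t]
  by_cases hC : G.IsClosedWalk k f
  · rw [if_pos hC, if_pos hC.1,
      Finset.prod_congr rfl (fun i (_ : i ∈ Finset.univ) => if_pos (hC.2 i))]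
    rw [Fin.prod_univ_succ]
  · rw [if_neg hC]
    rw [Multigraph.IsClosedWalk, not_and_or] at hC
    rcases hC with hC | hC
    · rw [if_neg hC, zero_mul]
    · push_neg at hC
      obtain ⟨i, hi⟩ := hC
      rw [Finset.prod_eq_zero (Finset.mem_univ i)
        (if_neg hi : (if G.feeds (f i.castSucc) (f i.succ)
          then G.chi ω (f i.succ) else 0) = 0), mul_zero]

/-- Key consequence of isospectrality: every closed non-backtracking walk has
integral total `ω`-weight. -/
private lemma closed_walk_integral (ω : G.D → ℝ)
    (h : (G.W1t ω).charpoly = G.W1.charpoly) (k : ℕ) (f : Fin (k + 1) → G.D)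
    (hf : G.IsClosedWalk k f) : ∃ m : ℤ, ∑ j : Fin (k + 1), ω (f j) = (m : ℝ) := by
  have htr : (G.W1t ω ^ (k + 1)).trace = (G.W1 ^ (k + 1)).trace := by
    rw [trace_pow_roots _ _ (Nat.succ_ne_zero k), trace_pow_roots _ _ (Nat.succ_ne_zero k), h]
  rw [trace_W1_pow, trace_W1t_pow] at htr
  have hone := sum_eq_card_forces_one _ _ (fun g hg => by
      rw [norm_prod]
      exact Finset.prod_eq_one (fun j _ => G.abs_chi ω (g j))) htr f
    (Finset.mem_filter.mpr ⟨Finset.mem_univ f, hf⟩)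
  have hexp : Complex.exp (2 * Real.pi * Complex.I
      * ((∑ j : Fin (k + 1), ω (f j) : ℝ) : ℂ)) = 1 := by
    rw [← hone]
    rw [show (∏ j : Fin (k + 1), G.chi ω (f j))
        = Complex.exp (∑ j : Fin (k + 1), 2 * Real.pi * Complex.I * (ω (f j) : ℂ)) by
      rw [Complex.exp_sum]
      exact Finset.prod_congr rfl (fun j _ => rfl)]
    congr 1
    rw [← Finset.mul_sum]
    push_cast
    ring
  rw [Complex.exp_eq_one_iff] at hexp
  obtain ⟨m, hm⟩ := hexp
  refine ⟨m, ?_⟩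
  have h2pi : (2 * Real.pi * Complex.I : ℂ) ≠ 0 := by
    simpa [mul_comm] using Complex.two_pi_I_ne_zero
  have : ((∑ j : Fin (k + 1), ω (f j) : ℝ) : ℂ) = (m : ℂ) := by
    apply mul_left_cancel₀ h2pi
    rw [hm]
    ring
  exact_mod_cast this

end Multigraph

namespace Multigraph

open Finset

private lemma pairing_int (G : Multigraph) (ω : G.D → ℝ) (hω : G.IsOneForm ω)
    (h : (G.W1t ω).charpoly = G.W1.charpoly) :
    ∀ (N : ℕ) (α : G.D → ℤ), α ∈ G.H1set → (∑ d : G.D, (α d).toNat) ≤ N →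
      ∃ m : ℤ, G.pairingZ ω α = (m : ℝ) := by
  have hzero : ∀ α : G.D → ℤ, α ∈ G.H1set → (¬ ∃ d, 0 < α d) →
      ∃ m : ℤ, G.pairingZ ω α = (m : ℝ) := by
    intro α hα hno
    push_neg at hno
    have hz : ∀ d, α d = 0 := by
      intro d
      have h1 := hno d
      have h2 := hno (G.inv d)
      rw [hα.1 d] at h2
      omega
    refine ⟨0, ?_⟩
    rw [Multigraph.pairingZ]
    simp [hz]
  intro N
  induction N with
  | zero =>
      intro α hα hN
      apply hzero α hα
      rintro ⟨d, hd⟩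
      have h1 : (α d).toNat ≤ ∑ d : G.D, (α d).toNat :=
        Finset.single_le_sum (f := fun d : G.D => (α d).toNat)
          (fun i _ => Nat.zero_le _) (Finset.mem_univ d)
      omega
  | succ N ih =>
      intro α hα hN
      by_cases hpos : ∃ d, 0 < α d
      case neg => exact hzero α hα hpos
      obtain ⟨d₀, hd₀⟩ := hpos
      -- the successor property: a positive dart feeds into another positive dart
      have succ_ex : ∀ d : G.D, 0 < α d → ∃ e, G.feeds d e ∧ 0 < α e := by
        intro d hd
        have hdiv := hα.2 (G.head d)
        by_contra hno
        push_neg at hno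
        have hnn : ∀ e ∈ Finset.univ.filter (fun e : G.D => G.head e = G.head d),
            0 ≤ α e := by
          intro e' he'
          by_contra hlt
          push_neg at hlt
          have he'v : G.head e' = G.head d := (Finset.mem_filter.mp he').2
          have hfeeds : G.feeds d (G.inv e') := by
            constructor
            · rw [Multigraph.tail, G.inv_inv, he'v]
            · intro hcontra
              have he'd : e' = d := by
                have := congrArg G.inv hcontra
                rwa [G.inv_inv, G.inv_inv] at this
              rw [he'd] at hlt
              omega
          have hposinv : 0 < α (G.inv e') := by
            rw [hα.1 e']
            omega
          have := hno (G.inv e') hfeeds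
          omega
        have hsp : 0 < ∑ e ∈ Finset.univ.filter (fun e : G.D => G.head e = G.head d), α e :=
          Finset.sum_pos' hnn ⟨d, Finset.mem_filter.mpr ⟨Finset.mem_univ d, rfl⟩, hd⟩
        omega
      -- build an infinite walk in the positive support
      let S := {d : G.D // 0 < α d}
      let step : S → S := fun s =>
        ⟨Classical.choose (succ_ex s.1 s.2), (Classical.choose_spec (succ_ex s.1 s.2)).2⟩
      have hstep : ∀ s : S, G.feeds s.1 (step s).1 := fun s =>
        (Classical.choose_spec (succ_ex s.1 s.2)).1
      let g : ℕ → S := fun n => step^[n] ⟨d₀, hd₀⟩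
      have hgstep : ∀ n : ℕ, G.feeds (g n).1 (g (n + 1)).1 := by
        intro n
        have hit : g (n + 1) = step (g n) := Function.iterate_succ_apply' step n _
        rw [hit]
        exact hstep (g n)
      -- find a repetition
      have hrep : ∃ j : ℕ, ∃ i : ℕ, i < j ∧ g i = g j := by
        obtain ⟨i, j, hne, hg⟩ := Finite.exists_ne_map_eq_of_infinite g
        rcases Nat.lt_or_ge i j with hij | hij
        · exact ⟨j, i, hij, hg⟩
        · exact ⟨i, j, by omega, hg.symm⟩
      obtain ⟨i₀, hi₀lt, hgij⟩ := Nat.find_spec hrep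
      have ginj : ∀ s t : ℕ, s < t → t < Nat.find hrep → g s ≠ g t := by
        intro s t hst htj hgst
        exact Nat.find_min hrep htj ⟨s, hst, hgst⟩
      set k := Nat.find hrep - i₀ - 1 with hkdef
      have hk1 : i₀ + (k + 1) = Nat.find hrep := by omega
      let f : Fin (k + 1) → G.D := fun t => (g (i₀ + (t : ℕ))).1
      have hfpos : ∀ t, 0 < α (f t) := fun t => (g (i₀ + (t : ℕ))).2
      have hwalk : G.IsClosedWalk k f := by
        constructor
        · have h1 : f (Fin.last k) = (g (i₀ + k)).1 := rfl
          have h2 : f 0 = (g (Nat.find hrep)).1 := by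
            show (g (i₀ + ((0 : Fin (k + 1)) : ℕ))).1 = (g (Nat.find hrep)).1
            rw [show i₀ + ((0 : Fin (k + 1)) : ℕ) = i₀ by simp, hgij]
          rw [h1, h2, show Nat.find hrep = (i₀ + k) + 1 by omega]
          exact hgstep (i₀ + k)
        · intro i
          have h1 : f i.castSucc = (g (i₀ + (i : ℕ))).1 := by
            show (g (i₀ + ((i.castSucc : Fin (k + 1)) : ℕ))).1 = _
            rw [Fin.coe_castSucc]
          have h2 : f i.succ = (g (i₀ + (i : ℕ) + 1)).1 := by
            show (g (i₀ + ((i.succ : Fin (k + 1)) : ℕ))).1 = _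
            rw [Fin.val_succ, ← Nat.add_assoc]
          rw [h1, h2]
          exact hgstep (i₀ + (i : ℕ))
      have finj : Function.Injective f := by
        intro s t hst
        have hg' : g (i₀ + (s : ℕ)) = g (i₀ + (t : ℕ)) := Subtype.ext hst
        by_contra hne
        have hsvt : (s : ℕ) ≠ (t : ℕ) := fun hc => hne (Fin.ext hc)
        rcases Nat.lt_or_ge (s : ℕ) (t : ℕ) with h' | h'
        · exact ginj _ _ (by omega) (by have := t.isLt; omega) hg'
        · exact ginj _ _ (by omega) (by have := s.isLt; omega) hg'.symm
      -- the cycle flow γ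
      let cnt : G.D → ℕ := fun d => (Finset.univ.filter (fun t : Fin (k + 1) => f t = d)).card
      let γ : G.D → ℤ := fun d => (cnt d : ℤ) - (cnt (G.inv d) : ℤ)
      have hcnt_le : ∀ d, cnt d ≤ 1 := by
        intro d
        apply Finset.card_le_one.mpr
        intro a ha b hb
        exact finj (((Finset.mem_filter.mp ha).2).trans ((Finset.mem_filter.mp hb).2).symm)
      have hcnt_pos : ∀ d, 0 < cnt d → 0 < α d := by
        intro d hd
        obtain ⟨t, ht⟩ := Finset.card_pos.mp hd
        have hft := (Finset.mem_filter.mp ht).2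
        rw [← hft]
        exact hfpos t
      have hcnt_f : ∀ t, cnt (f t) = 1 := by
        intro t
        refine Nat.le_antisymm (hcnt_le _) ?_
        exact Finset.card_pos.mpr ⟨t, Finset.mem_filter.mpr ⟨Finset.mem_univ t, rfl⟩⟩
      have hnotboth : ∀ d, 0 < cnt d → cnt (G.inv d) = 0 := by
        intro d hd
        by_contra hc
        have h1 := hcnt_pos d hd
        have h2 := hcnt_pos (G.inv d) (Nat.pos_of_ne_zero hc)
        rw [hα.1 d] at h2
        omega
      -- counting identities
      have hcnt_cast : ∀ (R : Type) [inst : CommRing R] (d : G.D),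
          ((cnt d : R)) = ∑ t : Fin (k + 1), (if f t = d then (1 : R) else 0) := by
        intro R _ d
        rw [show cnt d = ∑ t : Fin (k + 1), (if f t = d then 1 else 0) from
          Finset.card_filter _ _]
        push_cast
        rfl
      -- the rotation of the cycle
      let rot : Fin (k + 1) → Fin (k + 1) := fun t =>
        if ht : (t : ℕ) < k then ⟨(t : ℕ) + 1, by omega⟩ else 0
      have hrot_pos : ∀ (t : Fin (k + 1)) (ht : (t : ℕ) < k),
          rot t = ⟨(t : ℕ) + 1, by omega⟩ := fun t ht => dif_pos ht
      have hrot_neg : ∀ (t : Fin (k + 1)), ¬((t : ℕ) < k) → rot t = 0 := fun t ht => dif_neg ht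
      have hrot : ∀ t, G.tail (f (rot t)) = G.head (f t) := by
        intro t
        by_cases ht : (t : ℕ) < k
        · rw [hrot_pos t ht]
          have hfeeds := hwalk.2 ⟨(t : ℕ), ht⟩
          have e1 : ((⟨(t : ℕ), ht⟩ : Fin k)).castSucc = t := Fin.ext rfl
          have e2 : ((⟨(t : ℕ), ht⟩ : Fin k)).succ = (⟨(t : ℕ) + 1, by omega⟩ : Fin (k + 1)) :=
            Fin.ext rfl
          rw [e1, e2] at hfeeds
          exact hfeeds.1.symm
        · have htl : t = Fin.last k := Fin.ext (by have h1 := t.isLt; rw [Fin.val_last]; omega)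
          rw [hrot_neg t ht, htl]
          exact hwalk.1.1.symm
      have hrotinj : Function.Injective rot := by
        intro s t hrst
        by_cases hs : (s : ℕ) < k <;> by_cases ht : (t : ℕ) < k
        · rw [hrot_pos s hs, hrot_pos t ht, Fin.mk.injEq] at hrst
          exact Fin.ext (by omega)
        · rw [hrot_pos s hs, hrot_neg t ht] at hrst
          have hv := congrArg Fin.val hrst
          simp at hv
        · rw [hrot_neg s hs, hrot_pos t ht] at hrst
          have hv := congrArg Fin.val hrst
          simp at hv
        · have h1 := s.isLt
          have h2 := t.isLt
          exact Fin.ext (by omega)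
      have hrotbij : Function.Bijective rot :=
        Finite.injective_iff_bijective.mp hrotinj
      -- γ is a 1-cycle
      have hγH1 : γ ∈ G.H1set := by
        constructor
        · intro d
          show (cnt (G.inv d) : ℤ) - (cnt (G.inv (G.inv d)) : ℤ)
            = -((cnt d : ℤ) - (cnt (G.inv d) : ℤ))
          rw [G.inv_inv]
          ring
        · intro v
          have hA : (∑ e ∈ Finset.univ.filter (fun e : G.D => G.head e = v), (cnt e : ℤ))
              = ∑ t : Fin (k + 1), (if G.head (f t) = v then (1 : ℤ) else 0) := by
            rw [Finset.sum_congr rfl (fun e (_ : e ∈ _) => hcnt_cast ℤ e), Finset.sum_comm]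
            apply Finset.sum_congr rfl
            intro t _
            rw [Finset.sum_ite_eq (Finset.univ.filter (fun e : G.D => G.head e = v)) (f t)
              (fun _ => (1 : ℤ))]
            by_cases hv : G.head (f t) = v
            · simp [Finset.mem_filter, hv]
            · simp [Finset.mem_filter, hv]
          have hB : (∑ e ∈ Finset.univ.filter (fun e : G.D => G.head e = v),
                (cnt (G.inv e) : ℤ))
              = ∑ t : Fin (k + 1), (if G.tail (f t) = v then (1 : ℤ) else 0) := by
            have hswap : ∀ (t : Fin (k + 1)) (e : G.D),
                (if f t = G.inv e then (1 : ℤ) else 0)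
                  = (if G.inv (f t) = e then (1 : ℤ) else 0) := by
              intro t e
              have hiff : f t = G.inv e ↔ G.inv (f t) = e := by
                constructor
                · intro hh; rw [hh, G.inv_inv]
                · intro hh; rw [← hh, G.inv_inv]
              rw [if_congr hiff rfl rfl]
            rw [Finset.sum_congr rfl (fun e (_ : e ∈ _) => hcnt_cast ℤ (G.inv e)),
              Finset.sum_comm]
            apply Finset.sum_congr rfl
            intro t _
            rw [Finset.sum_congr rfl (fun e (_ : e ∈ _) => hswap t e)]
            rw [Finset.sum_ite_eq (Finset.univ.filter (fun e : G.D => G.head e = v))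
              (G.inv (f t)) (fun _ => (1 : ℤ))]
            by_cases hv : G.tail (f t) = v
            · simp [Finset.mem_filter, hv, show G.head (G.inv (f t)) = v from hv]
            · simp [Finset.mem_filter, hv, show ¬ G.head (G.inv (f t)) = v from hv]
          have hAB : ∑ t : Fin (k + 1), (if G.head (f t) = v then (1 : ℤ) else 0)
              = ∑ t : Fin (k + 1), (if G.tail (f t) = v then (1 : ℤ) else 0) :=
            Fintype.sum_bijective rot hrotbij _ _ (fun t => by rw [hrot t])
          have hgoal : ∑ e ∈ Finset.univ.filter (fun e : G.D => G.head e = v),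
              ((cnt e : ℤ) - (cnt (G.inv e) : ℤ)) = 0 := by
            rw [Finset.sum_sub_distrib, hA, hB, hAB]
            ring
          exact hgoal
      -- the pairing against γ is the ω-weight of the cycle
      have hbijinv : Function.Bijective G.inv := Function.Involutive.bijective G.inv_inv
      have hpγ : G.pairingZ ω γ = ∑ t : Fin (k + 1), ω (f t) := by
        rw [Multigraph.pairingZ]
        have hsplit : ∀ d : G.D, ω d * ((γ d : ℤ) : ℝ)
            = ω d * (cnt d : ℝ) - ω d * (cnt (G.inv d) : ℝ) := by
          intro d
          show ω d * ((((cnt d : ℤ) - (cnt (G.inv d) : ℤ)) : ℤ) : ℝ) = _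
          push_cast
          ring
        rw [Finset.sum_congr rfl (fun d (_ : d ∈ _) => hsplit d), Finset.sum_sub_distrib]
        have hswap : ∑ d : G.D, ω d * (cnt (G.inv d) : ℝ)
            = ∑ d : G.D, ω (G.inv d) * (cnt d : ℝ) :=
          Fintype.sum_bijective G.inv hbijinv _ _ (fun d => by rw [G.inv_inv])
        have hneg : ∑ d : G.D, ω (G.inv d) * (cnt d : ℝ)
            = - ∑ d : G.D, ω d * (cnt d : ℝ) := by
          rw [← Finset.sum_neg_distrib]
          apply Finset.sum_congr rfl
          intro d _
          rw [hω d]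
          ring
        rw [hswap, hneg, sub_neg_eq_add]
        have hS : ∑ d : G.D, ω d * (cnt d : ℝ) = ∑ t : Fin (k + 1), ω (f t) := by
          rw [Finset.sum_congr rfl
            (fun d (_ : d ∈ _) => by rw [hcnt_cast ℝ d, Finset.mul_sum]), Finset.sum_comm]
          apply Finset.sum_congr rfl
          intro t _
          have hmul : ∀ d : G.D, ω d * (if f t = d then (1 : ℝ) else 0)
              = (if f t = d then ω d else 0) := by
            intro d
            by_cases hd : f t = d
            · rw [if_pos hd, if_pos hd, mul_one]
            · rw [if_neg hd, if_neg hd, mul_zero]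
          rw [Finset.sum_congr rfl (fun d (_ : d ∈ _) => hmul d),
            Finset.sum_ite_eq Finset.univ (f t) (fun d => ω d)]
          simp
        rw [hS]
        ring
      -- the new flow α - γ
      have hpt : ∀ d : G.D, (α d - γ d).toNat ≤ (α d).toNat := by
        intro d
        have h1 := hcnt_le d
        have h2 := hcnt_le (G.inv d)
        have h3 : cnt d = 0 ∨ 0 < α d := by
          rcases Nat.eq_zero_or_pos (cnt d) with hh | hh
          · exact Or.inl hh
          · exact Or.inr (hcnt_pos d hh)
        have h4 : cnt (G.inv d) = 0 ∨ 0 < α (G.inv d) := by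
          rcases Nat.eq_zero_or_pos (cnt (G.inv d)) with hh | hh
          · exact Or.inl hh
          · exact Or.inr (hcnt_pos _ hh)
        have h5 : α (G.inv d) = - α d := hα.1 d
        show (α d - ((cnt d : ℤ) - (cnt (G.inv d) : ℤ))).toNat ≤ (α d).toNat
        omega
      have hst : (α (f 0) - γ (f 0)).toNat < (α (f 0)).toNat := by
        have h1 := hcnt_f 0
        have h2 := hnotboth (f 0) (by omega)
        have h3 := hfpos 0
        show (α (f 0) - ((cnt (f 0) : ℤ) - (cnt (G.inv (f 0)) : ℤ))).toNat < (α (f 0)).toNat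
        omega
      have hdec : ∑ d : G.D, (α d - γ d).toNat < ∑ d : G.D, (α d).toNat :=
        Finset.sum_lt_sum (fun d _ => hpt d) ⟨f 0, Finset.mem_univ _, hst⟩
      have hα' : (fun d => α d - γ d) ∈ G.H1set := by
        constructor
        · intro d
          show α (G.inv d) - γ (G.inv d) = -(α d - γ d)
          rw [hα.1 d, hγH1.1 d]
          ring
        · intro v
          show ∑ d ∈ Finset.univ.filter (fun d : G.D => G.head d = v), (α d - γ d) = 0
          rw [Finset.sum_sub_distrib, hα.2 v, hγH1.2 v]
          ring
      obtain ⟨m', hm'⟩ := ih (fun d => α d - γ d) hα' (by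
        show (∑ d : G.D, (α d - γ d).toNat) ≤ N
        omega)
      obtain ⟨mγ, hmγ⟩ := Multigraph.closed_walk_integral G ω h k f hwalk
      refine ⟨m' + mγ, ?_⟩
      have hlin : G.pairingZ ω α = G.pairingZ ω (fun d => α d - γ d) + G.pairingZ ω γ := by
        rw [Multigraph.pairingZ, Multigraph.pairingZ, Multigraph.pairingZ, ← mul_add,
          ← Finset.sum_add_distrib]
        congr 1
        apply Finset.sum_congr rfl
        intro d _
        push_cast
        ring
      rw [hlin, hm', hpγ, hmγ]
      push_cast
      ring

end Multigraph

open Multigraph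

/-- if the twisted edge adjacency matrix `W_{1,ω}` has the same
spectrum, with multiplicity, as `W₁` (equivalently, the same characteristic
polynomial), then the character `χ_ω` restricted to `H₁(G,ℤ)` is trivial. -/
theorem isospectral_implies_trivial_character (G : Multigraph) (hG : G.Connected)
    (ω : G.D → ℝ) (hω : G.IsOneForm ω)
    (h : (G.W1t ω).charpoly = G.W1.charpoly) :
    ∀ α ∈ G.H1set, Complex.exp (2 * Real.pi * Complex.I * (G.pairingZ ω α : ℝ)) = 1 := by
  intro α hα
  obtain ⟨m, hm⟩ := Multigraph.pairing_int G ω hω h (∑ d : G.D, (α d).toNat) α hα le_rfl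
  rw [hm, Complex.exp_eq_one_iff]
  exact ⟨m, by push_cast; ring⟩
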